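/- Let α > 0, β ∈ ℝ with |β| < α, and δ > 0, and let ψ : ℝ → ℂ be the Normal Inverse Gaussian characteristic exponent ψ(u) := −δ (√(α² − (β + iu)²) − √(α² − β²)), where the square root of a complex number is the principal branch. Then for every u ∈ ℝ, lim_{t → 0+} t · ψ(u / t) = −δ |u|. (Scaling limit of the NIG characteristic exponent towards the Cauchy exponent.) -/

import Mathlib

open Filter Topology Complex

/-- The Normal Inverse Gaussian characteristic exponent
`ψ(u) = −δ (√(α² − (β + iu)²) − √(α² − β²))`, the complex square root being the
principal branch `z ^ (1/2)`. -/
noncomputable def nigPsi (α β δ : ℝ) (u : ℝ) : ℂ :=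
  -(δ : ℂ) * ((((α : ℂ) ^ 2 - ((β : ℂ) + Complex.I * u) ^ 2) ^ ((1 : ℂ) / 2))
      - (Real.sqrt (α ^ 2 - β ^ 2) : ℂ))

lemma aux_mul_cpow_half {t : ℝ} (ht : 0 < t) {z : ℂ} (hz : z ≠ 0) :
    (t : ℂ) * z ^ ((1 : ℂ) / 2) = (((t : ℂ)) ^ 2 * z) ^ ((1 : ℂ) / 2) := by
  have ht2 : (0 : ℝ) < t ^ 2 := by positivity
  have hcast : ((t : ℂ)) ^ 2 = ((t ^ 2 : ℝ) : ℂ) := by push_cast; ring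
  rw [hcast, Complex.cpow_def_of_ne_zero hz,
    Complex.cpow_def_of_ne_zero (mul_ne_zero (by exact_mod_cast ht2.ne') hz),
    Complex.log_ofReal_mul ht2 hz, add_mul, Complex.exp_add]
  congr 1
  rw [show ((Real.log (t ^ 2) : ℂ)) * ((1 : ℂ) / 2) = ((Real.log (t ^ 2) / 2 : ℝ) : ℂ) by
    push_cast; ring]
  rw [show Real.log (t ^ 2) / 2 = Real.log t by
    rw [Real.log_pow]; push_cast; ring]
  rw [← Complex.ofReal_exp, Real.exp_log ht]

/-- Scaling limit of the NIG characteristic exponent towards the Cauchy exponent: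
for every `u ∈ ℝ`, `lim_{t→0+} t ψ(u/t) = −δ |u|`. -/
theorem nig_char_exponent_scaling_limit
    (α β δ : ℝ) (hα : 0 < α) (hβ : |β| < α) (hδ : 0 < δ) (u : ℝ) :
    Tendsto (fun t : ℝ => (t : ℂ) * nigPsi α β δ (u / t))
      (𝓝[>] (0 : ℝ)) (𝓝 ((-δ * |u| : ℝ) : ℂ)) := by
  have hab : 0 < α ^ 2 - β ^ 2 := by
    have := sq_lt_sq' (neg_lt_of_abs_lt hβ) (lt_of_abs_lt hβ)
    linarith
  rcases eq_or_ne u 0 with rfl | hu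
  · have hpsi : nigPsi α β δ 0 = 0 := by
      unfold nigPsi
      have : (((α : ℂ) ^ 2 - ((β : ℂ) + Complex.I * (0 : ℝ)) ^ 2) ^ ((1 : ℂ) / 2))
          = (Real.sqrt (α ^ 2 - β ^ 2) : ℂ) := by
        rw [show ((α : ℂ) ^ 2 - ((β : ℂ) + Complex.I * (0 : ℝ)) ^ 2)
            = ((α ^ 2 - β ^ 2 : ℝ) : ℂ) by push_cast; ring]
        rw [show ((1 : ℂ) / 2) = (((1 / 2 : ℝ) : ℂ)) by norm_num,
          ← Complex.ofReal_cpow hab.le, Real.sqrt_eq_rpow]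
      rw [this]; ring
    simp only [zero_div, hpsi, mul_zero]
    have : ((-δ * |(0 : ℝ)| : ℝ) : ℂ) = 0 := by norm_num
    rw [this]
    exact tendsto_const_nhds
  · -- u ≠ 0
    set F : ℝ → ℂ := fun t =>
      -(δ : ℂ) * ((((α : ℂ) * t) ^ 2 - ((β : ℂ) * t + Complex.I * u) ^ 2) ^ ((1 : ℂ) / 2)
        - (t : ℂ) * (Real.sqrt (α ^ 2 - β ^ 2) : ℂ)) with hF
    have heq : ∀ t ∈ Set.Ioi (0 : ℝ),
        (t : ℂ) * nigPsi α β δ (u / t) = F t := by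
      intro t ht
      have ht : (0 : ℝ) < t := ht
      have htC : (t : ℂ) ≠ 0 := by exact_mod_cast ht.ne'
      unfold nigPsi
      set z : ℂ := (α : ℂ) ^ 2 - ((β : ℂ) + Complex.I * (u / t : ℝ)) ^ 2 with hzdef
      have hzre : 0 < z.re := by
        have : z.re = α ^ 2 - β ^ 2 + (u / t) ^ 2 := by
          simp [hzdef, Complex.sub_re, Complex.add_re, Complex.mul_re, pow_two]
          ring
        rw [this]; positivity
      have hz : z ≠ 0 := by
        intro h; rw [h] at hzre; simp at hzre
      have hz2 : (t : ℂ) ^ 2 * z = ((α : ℂ) * t) ^ 2 - ((β : ℂ) * t + Complex.I * u) ^ 2 := by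
        rw [hzdef]
        have : ((u / t : ℝ) : ℂ) = (u : ℂ) / (t : ℂ) := by push_cast; ring
        rw [this]
        field_simp
      rw [hF]
      simp only
      rw [← hz2, ← aux_mul_cpow_half ht hz]
      ring
    have hcont : Tendsto F (𝓝 (0 : ℝ)) (𝓝 ((-δ * |u| : ℝ) : ℂ)) := by
      have hF0 : F 0 = ((-δ * |u| : ℝ) : ℂ) := by
        rw [hF]
        simp only [Complex.ofReal_zero, mul_zero, zero_add, zero_pow, sub_zero]
        have h1 : (0 : ℂ) ^ 2 - (Complex.I * u) ^ 2 = ((u ^ 2 : ℝ) : ℂ) := by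
          push_cast; rw [mul_pow, Complex.I_sq]; ring
        rw [h1, show ((1 : ℂ) / 2) = (((1 / 2 : ℝ) : ℂ)) by norm_num,
          ← Complex.ofReal_cpow (by positivity), ← Real.sqrt_eq_rpow,
          Real.sqrt_sq_eq_abs]
        push_cast; ring
      rw [← hF0]
      have hbase : ContinuousAt (fun t : ℝ =>
          (((α : ℂ) * t) ^ 2 - ((β : ℂ) * t + Complex.I * u) ^ 2)) 0 := by
        fun_prop
      have hval : (((α : ℂ) * (0:ℝ)) ^ 2 - ((β : ℂ) * (0:ℝ) + Complex.I * u) ^ 2)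
          ∈ Complex.slitPlane := by
        left
        have : (((α : ℂ) * (0:ℝ)) ^ 2 - ((β : ℂ) * (0:ℝ) + Complex.I * u) ^ 2)
            = ((u ^ 2 : ℝ) : ℂ) := by
          rw [show ((β : ℂ) * (0:ℝ) + Complex.I * u) ^ 2 = Complex.I ^ 2 * u ^ 2 by push_cast; ring,
            Complex.I_sq]
          push_cast; ring
        rw [this]
        simp only [Complex.ofReal_re]
        positivity
      have hpow : ContinuousAt (fun t : ℝ =>
          (((α : ℂ) * t) ^ 2 - ((β : ℂ) * t + Complex.I * u) ^ 2) ^ ((1 : ℂ) / 2)) 0 :=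
        hbase.cpow continuousAt_const hval
      have : ContinuousAt F 0 := by
        rw [hF]
        exact continuousAt_const.mul (hpow.sub (by fun_prop))
      exact this
    have h2 : Tendsto F (𝓝[>] (0:ℝ)) (𝓝 ((-δ * |u| : ℝ) : ℂ)) :=
      hcont.mono_left nhdsWithin_le_nhds
    exact h2.congr' (eventually_nhdsWithin_of_forall fun t ht => (heq t ht).symm)
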